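/- arXiv:1108.2022 — 3 statements merged into one kernel-verified Lean document; each statement's English description precedes it below -/
import Mathlib

section
/- Let h₃, h₄ : U → ℝ be C² nonvanishing functions on an open set U ⊆ ℝ³ with coordinates (x¹,x²,y³), and write a* = ∂a/∂y³. Define the vertical connection coefficients C³₃₃ = h₃*/(2h₃), C³₄₄ = −h₄*/(2h₃), C⁴₃₄ = C⁴₄₃ = h₄*/(2h₄), with all other C^a_{bc} = 0 (a,b,c ∈ {3,4}); set C₃ = C³₃₃ + C⁴₃₄ and C₄ = C³₄₃ + C⁴₄₄ (= 0), and define R_{bc} = ∂₃(C³_{bc}) − D_c(C_b) + Σ_{e} C^e_{bc} C_e − Σ_{e,d} C^e_{bd} C^d_{ec}, where D₃ = ∂₃ and D₄ = 0 (no quantity depends on y⁴). Then on U: R₃₃ = −h₄**/(2h₄) + (h₄*)²/(4h₄²) + h₃*h₄*/(4h₃h₄), R₄₄ = −h₄**/(2h₃) + h₃*h₄*/(4h₃²) + (h₄*)²/(4h₃h₄), and consequently R₃₃/h₃ = R₄₄/h₄ = −(1/(2h₃h₄)) [ h₄** − (h₄*)²/(2h₄) − h₃*h₄*/(2h₃)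 ]. -/
noncomputable section

/-- Partial derivative `∂_i` on `ℝ³` (coordinates `(x¹,x²,y³)` indexed by `0,1,2`);
`pd 2 a = a*`. -/
def pd (i : Fin 3) (f : (Fin 3 → ℝ) → ℝ) : (Fin 3 → ℝ) → ℝ :=
  fun x => fderiv ℝ f x (Pi.single i 1)

/-- The vertical coefficients `C^a_{bc}` (indices `3,4` encoded as `0,1`) of the canonical
d-connection of the vertical metric `g₃ = h₃`, `g₄ = h₄`:
`C³₃₃ = h₃*/(2h₃)`, `C³₄₄ = −h₄*/(2h₃)`, `C⁴₃₄ = C⁴₄₃ = h₄*/(2h₄)`, all others zero. -/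
def Cv (h3 h4 : (Fin 3 → ℝ) → ℝ) : Fin 2 → Fin 2 → Fin 2 → (Fin 3 → ℝ) → ℝ :=
  ![![![fun x => pd 2 h3 x / (2 * h3 x), fun _ => 0],
      ![fun _ => 0, fun x => -pd 2 h4 x / (2 * h3 x)]],
    ![![fun _ => 0, fun x => pd 2 h4 x / (2 * h4 x)],
      ![fun x => pd 2 h4 x / (2 * h4 x), fun _ => 0]]]

/-- `C_b = C³_{b3} + C⁴_{b4}`. -/
def Clow (h3 h4 : (Fin 3 → ℝ) → ℝ) (b : Fin 2) : (Fin 3 → ℝ) → ℝ :=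
  fun x => Cv h3 h4 0 b 0 x + Cv h3 h4 1 b 1 x

/-- `R_{bc} = ∂₃(C³_{bc}) − D_c(C_b) + Σ_e C^e_{bc} C_e − Σ_{e,d} C^e_{bd} C^d_{ec}`,
with `D₃ = ∂₃` and `D₄ = 0` (nothing depends on `y⁴`). -/
def RicV (h3 h4 : (Fin 3 → ℝ) → ℝ) (b c : Fin 2) (x : Fin 3 → ℝ) : ℝ :=
  pd 2 (Cv h3 h4 0 b c) x - (if c = 0 then pd 2 (Clow h3 h4 b) x else 0) +
    (∑ e : Fin 2, Cv h3 h4 e b c x * Clow h3 h4 e x) -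
    ∑ e : Fin 2, ∑ d : Fin 2, Cv h3 h4 e b d x * Cv h3 h4 d e c x

section Aux

variable {f g : (Fin 3 → ℝ) → ℝ} {x : Fin 3 → ℝ} {i : Fin 3}

lemma pd_add' (hf : DifferentiableAt ℝ f x) (hg : DifferentiableAt ℝ g x) :
    pd i (fun y => f y + g y) x = pd i f x + pd i g x := by
  simp [pd, fderiv_fun_add hf hg]

lemma pd_neg' : pd i (fun y => -f y) x = -pd i f x := by
  simp [pd, fderiv_neg]

lemma pd_const_mul' (hf : DifferentiableAt ℝ f x) (c : ℝ) :
    pd i (fun y => c * f y) x = c * pd i f x := by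
  simp [pd, fderiv_const_mul hf c]

lemma pd_inv' (hg : DifferentiableAt ℝ g x) (hx : g x ≠ 0) :
    pd i (fun y => (g y)⁻¹) x = -pd i g x / g x ^ 2 := by
  have h : fderiv ℝ (fun y => (g y)⁻¹) x
      = (fderiv ℝ Inv.inv (g x)).comp (fderiv ℝ g x) :=
    fderiv_comp x (differentiableAt_inv hx) hg
  simp only [pd, h, fderiv_inv' hx, ContinuousLinearMap.comp_apply,
    ContinuousLinearMap.neg_apply, ContinuousLinearMap.mulLeftRight_apply]
  ring

lemma pd_div' (hf : DifferentiableAt ℝ f x) (hg : DifferentiableAt ℝ g x) (hx : g x ≠ 0) :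
    pd i (fun y => f y / g y) x = (pd i f x * g x - f x * pd i g x) / g x ^ 2 := by
  simp only [div_eq_mul_inv]
  rw [pd, fderiv_fun_mul (d := fun y => (g y)⁻¹) hf (hg.inv hx)]
  have h2 : fderiv ℝ (fun y => (g y)⁻¹) x (Pi.single i 1) = -pd i g x / g x ^ 2 :=
    pd_inv' hg hx
  simp only [ContinuousLinearMap.add_apply, ContinuousLinearMap.smul_apply, smul_eq_mul, h2]
  show f x * (-pd i g x / g x ^ 2) + (g x)⁻¹ * pd i f x = _
  field_simp
  ring

lemma differentiableAt_pd (hf : ContDiffAt ℝ 2 f x) : DifferentiableAt ℝ (pd i f) x := by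
  have h1 : ContDiffAt ℝ 1 (fderiv ℝ f) x := hf.fderiv_right (by norm_num)
  exact (h1.differentiableAt one_ne_zero).clm_apply (differentiableAt_const _)

end Aux

set_option maxHeartbeats 1000000 in
/-- Vertical Ricci computation for the vertical metric `[h₃, h₄]` with Killing symmetry. -/
theorem vertical_ricci_of_killing_v_metric
    (U : Set (Fin 3 → ℝ)) (hU : IsOpen U)
    (h3 h4 : (Fin 3 → ℝ) → ℝ)
    (hh3 : ContDiffOn ℝ 2 h3 U) (hh4 : ContDiffOn ℝ 2 h4 U)
    (hh3ne : ∀ x ∈ U, h3 x ≠ 0) (hh4ne : ∀ x ∈ U, h4 x ≠ 0) :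
    ∀ x ∈ U,
      (RicV h3 h4 0 0 x =
        -pd 2 (pd 2 h4) x / (2 * h4 x) + (pd 2 h4 x) ^ 2 / (4 * (h4 x) ^ 2) +
          pd 2 h3 x * pd 2 h4 x / (4 * h3 x * h4 x)) ∧
      (RicV h3 h4 1 1 x =
        -pd 2 (pd 2 h4) x / (2 * h3 x) + pd 2 h3 x * pd 2 h4 x / (4 * (h3 x) ^ 2) +
          (pd 2 h4 x) ^ 2 / (4 * h3 x * h4 x)) ∧
      (RicV h3 h4 0 0 x / h3 x = RicV h3 h4 1 1 x / h4 x) ∧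
      (RicV h3 h4 1 1 x / h4 x =
        -(1 / (2 * h3 x * h4 x)) *
          (pd 2 (pd 2 h4) x - (pd 2 h4 x) ^ 2 / (2 * h4 x) -
            pd 2 h3 x * pd 2 h4 x / (2 * h3 x))) := by
  intro x hx
  have cd3 : ContDiffAt ℝ 2 h3 x := hh3.contDiffAt (hU.mem_nhds hx)
  have cd4 : ContDiffAt ℝ 2 h4 x := hh4.contDiffAt (hU.mem_nhds hx)
  have d3 : DifferentiableAt ℝ h3 x := cd3.differentiableAt (by norm_num)
  have d4 : DifferentiableAt ℝ h4 x := cd4.differentiableAt (by norm_num)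
  have dp3 : DifferentiableAt ℝ (pd 2 h3) x := differentiableAt_pd cd3
  have dp4 : DifferentiableAt ℝ (pd 2 h4) x := differentiableAt_pd cd4
  have h3ne : h3 x ≠ 0 := hh3ne x hx
  have h4ne : h4 x ≠ 0 := hh4ne x hx
  have g3ne : (2 : ℝ) * h3 x ≠ 0 := mul_ne_zero two_ne_zero h3ne
  have g4ne : (2 : ℝ) * h4 x ≠ 0 := mul_ne_zero two_ne_zero h4ne
  have dg3 : DifferentiableAt ℝ (fun y => 2 * h3 y) x := d3.const_mul 2
  have dg4 : DifferentiableAt ℝ (fun y => 2 * h4 y) x := d4.const_mul 2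
  have q3 : DifferentiableAt ℝ (fun y => pd 2 h3 y / (2 * h3 y)) x := by
    simpa only [div_eq_mul_inv, Pi.mul_def, Pi.inv_def] using dp3.mul (dg3.inv g3ne)
  have q4 : DifferentiableAt ℝ (fun y => pd 2 h4 y / (2 * h4 y)) x := by
    simpa only [div_eq_mul_inv, Pi.mul_def, Pi.inv_def] using dp4.mul (dg4.inv g4ne)
  have E3 : pd 2 (fun y => pd 2 h3 y / (2 * h3 y)) x =
      (pd 2 (pd 2 h3) x * (2 * h3 x) - pd 2 h3 x * (2 * pd 2 h3 x)) / (2 * h3 x) ^ 2 := by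
    rw [pd_div' dp3 dg3 g3ne, pd_const_mul' d3]
  have E4 : pd 2 (fun y => pd 2 h4 y / (2 * h4 y)) x =
      (pd 2 (pd 2 h4) x * (2 * h4 x) - pd 2 h4 x * (2 * pd 2 h4 x)) / (2 * h4 x) ^ 2 := by
    rw [pd_div' dp4 dg4 g4ne, pd_const_mul' d4]
  have Esum : pd 2 (fun y => pd 2 h3 y / (2 * h3 y) + pd 2 h4 y / (2 * h4 y)) x =
      pd 2 (fun y => pd 2 h3 y / (2 * h3 y)) x + pd 2 (fun y => pd 2 h4 y / (2 * h4 y)) x :=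
    pd_add' q3 q4
  have Eneg : pd 2 (fun y => -pd 2 h4 y / (2 * h3 y)) x =
      (-pd 2 (pd 2 h4) x * (2 * h3 x) - -pd 2 h4 x * (2 * pd 2 h3 x)) / (2 * h3 x) ^ 2 := by
    have := pd_div' (f := fun y => -pd 2 h4 y) dp4.neg dg3 g3ne (i := 2) (x := x)
    rw [this, pd_const_mul' d3, pd_neg']
  have hClow : Clow h3 h4 0 = fun y => pd 2 h3 y / (2 * h3 y) + pd 2 h4 y / (2 * h4 y) := rfl
  have R00 : RicV h3 h4 0 0 x =
      -pd 2 (pd 2 h4) x / (2 * h4 x) + (pd 2 h4 x) ^ 2 / (4 * (h4 x) ^ 2) +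
        pd 2 h3 x * pd 2 h4 x / (4 * h3 x * h4 x) := by
    simp only [RicV, Clow, Cv, Matrix.cons_val_zero, Matrix.cons_val_one, Matrix.head_cons,
      Fin.sum_univ_two, if_pos rfl, if_true, Fin.isValue, hClow]
    rw [Esum, E3, E4]
    field_simp
    ring
  have R11 : RicV h3 h4 1 1 x =
      -pd 2 (pd 2 h4) x / (2 * h3 x) + pd 2 h3 x * pd 2 h4 x / (4 * (h3 x) ^ 2) +
        (pd 2 h4 x) ^ 2 / (4 * h3 x * h4 x) := by
    simp only [RicV, Clow, Cv, Matrix.cons_val_zero, Matrix.cons_val_one, Matrix.head_cons,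
      Fin.sum_univ_two, Fin.isValue, if_neg (by decide : ¬(1 : Fin 2) = 0)]
    rw [Eneg]
    field_simp
    ring
  refine ⟨R00, R11, ?_, ?_⟩
  · rw [R00, R11]; field_simp; ring
  · rw [R11]; field_simp; ring
end
end

section
/- Let Λ, s ∈ ℝ with Υ₂ := Λ − 4s² ≠ 0. Let U ⊆ ℝ³ be open with coordinates (x¹,x²,y³), write a* = ∂a/∂y³ and ∂_k = ∂/∂x^k for k ∈ {1,2}, and let φ : U → ℝ be C² with ∂₃φ nowhere zero. Define h₄ := e^{2φ}/(4Υ₂), h₃ := (∂₃φ)²/Υ₂, w_k := ∂_kφ/∂₃φ (k = 1,2), and let n₁, n₂ be arbitrary C² functions of (x¹,x²) alone. Then on U the following hold: (i) −(1/(2h₃h₄)) [ h₄** − (h₄*)²/(2h₄) − h₃* h₄*/(2h₃) ] = −Υ₂; (ii) for k = 1,2: (w_k/(2h₄)) [ h₄** − (h₄*)²/(2h₄) − h₃* h₄*/(2h₃) ] + (h₄*/(4h₄)) ( ∂_k h₃/h₃ + ∂_k h₄/h₄ ) − ∂_k(h₄*)/(2h₄) = 0; (iii) for k = 1,2: (h₄/(2h₃))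 n_k** + ( (h₄/h₃) h₃* − (3/2) h₄* ) · n_k*/(2h₃) = 0. -/
noncomputable section

/-- Embedding of horizontal indices `{1,2}` into `Fin 3` (as `0,1`). -/
def ix (k : Fin 2) : Fin 3 := ⟨k.1, by omega⟩

lemma pd_hasFDerivAt {φ : (Fin 3 → ℝ) → ℝ} {x : Fin 3 → ℝ}
    (h : ContDiffAt ℝ 2 φ x) (i : Fin 3) :
    HasFDerivAt (pd i φ)
      ((fderiv ℝ (fderiv ℝ φ) x).flip (Pi.single i 1)) x := by
  have h1 : ContDiffAt ℝ 1 (fderiv ℝ φ) x := h.fderiv_right (by norm_num)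
  have h2 : HasFDerivAt (fderiv ℝ φ) (fderiv ℝ (fderiv ℝ φ) x) x :=
    (h1.differentiableAt one_ne_zero).hasFDerivAt
  have h3 := h2.clm_apply (hasFDerivAt_const (Pi.single i 1 : Fin 3 → ℝ) x)
  have he : ((fderiv ℝ φ x).comp (0 : (Fin 3 → ℝ) →L[ℝ] (Fin 3 → ℝ)) +
      (fderiv ℝ (fderiv ℝ φ) x).flip (Pi.single i 1))
      = (fderiv ℝ (fderiv ℝ φ) x).flip (Pi.single i 1) := by
    ext v; simp
  rw [he] at h3
  exact h3

lemma pd_exp {φ : (Fin 3 → ℝ) → ℝ} {y : Fin 3 → ℝ} (c : ℝ)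
    (h : DifferentiableAt ℝ φ y) (i : Fin 3) :
    pd i (fun z => Real.exp (2 * φ z) / c) y
      = 2 * pd i φ y * (Real.exp (2 * φ y) / c) := by
  have h1 : HasFDerivAt (fun z => 2 * φ z) ((2:ℝ) • fderiv ℝ φ y) y :=
    h.hasFDerivAt.const_mul 2
  have h2 := h1.exp
  have h3 : HasFDerivAt (fun z => Real.exp (2 * φ z) / c)
      ((1/c) • (Real.exp (2 * φ y) • ((2:ℝ) • fderiv ℝ φ y))) y := by
    have := h2.const_mul (1/c)
    simpa [one_div, inv_mul_eq_div] using this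
  show fderiv ℝ _ y _ = _
  rw [h3.fderiv]
  show (1/c) * (Real.exp (2 * φ y) * (2 * pd i φ y)) = _
  ring

lemma pd_sq {φ : (Fin 3 → ℝ) → ℝ} {y : Fin 3 → ℝ} (c : ℝ)
    (h : ContDiffAt ℝ 2 φ y) (i : Fin 3) :
    pd i (fun z => (pd 2 φ z) ^ 2 / c) y
      = 2 * pd 2 φ y * pd i (pd 2 φ) y / c := by
  have hG := pd_hasFDerivAt h 2
  set G' := (fderiv ℝ (fderiv ℝ φ) y).flip (Pi.single 2 1) with hG'
  have hsq : HasFDerivAt (fun z => (pd 2 φ z) ^ 2)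
      (pd 2 φ y • G' + pd 2 φ y • G') y := by
    have := hG.mul hG
    simp only [pow_two]; exact this
  have h3 : HasFDerivAt (fun z => (pd 2 φ z) ^ 2 / c)
      ((1/c) • (pd 2 φ y • G' + pd 2 φ y • G')) y := by
    have := hsq.const_mul (1/c)
    simpa [one_div, inv_mul_eq_div] using this
  show fderiv ℝ _ y _ = _
  rw [h3.fderiv]
  have hGi : G' (Pi.single i 1) = pd i (pd 2 φ) y := by
    show _ = fderiv ℝ (pd 2 φ) y (Pi.single i 1)
    rw [hG.fderiv]
  show (1/c) * (pd 2 φ y * G' (Pi.single i 1) + pd 2 φ y * G' (Pi.single i 1)) = _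
  rw [hGi]; ring

lemma pd_mul_eval {f g : (Fin 3 → ℝ) → ℝ} {x : Fin 3 → ℝ}
    (hf : DifferentiableAt ℝ f x) (hg : DifferentiableAt ℝ g x) (j : Fin 3) :
    pd j (fun y => f y * g y) x = f x * pd j g x + g x * pd j f x := by
  have h := hf.hasFDerivAt.mul hg.hasFDerivAt
  show fderiv ℝ _ x _ = _
  rw [HasFDerivAt.fderiv (f := fun y => f y * g y) h]
  rfl

/-- Verification of the solution-generating theorem with constant effective source
`Υ₂ = Λ − 4s² ≠ 0`: for `h₄ = e^{2φ}/(4Υ₂)`, `h₃ = (φ*)²/Υ₂`, `w_k = ∂_kφ/φ*` and any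
`n_k = n_k(x¹,x²)`, the vertical and mixed decoupled Einstein equations hold. -/
theorem offdiagonal_solution_constant_source
    (Λ s Υ₂ : ℝ) (hΥdef : Υ₂ = Λ - 4 * s ^ 2) (hΥne : Υ₂ ≠ 0)
    (U : Set (Fin 3 → ℝ)) (hU : IsOpen U)
    (φ : (Fin 3 → ℝ) → ℝ) (hφ : ContDiffOn ℝ 2 φ U)
    (hφs : ∀ x ∈ U, pd 2 φ x ≠ 0)
    (h₃ h₄ : (Fin 3 → ℝ) → ℝ)
    (hd4 : ∀ x, h₄ x = Real.exp (2 * φ x) / (4 * Υ₂))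
    (hd3 : ∀ x, h₃ x = (pd 2 φ x) ^ 2 / Υ₂)
    (w : Fin 2 → (Fin 3 → ℝ) → ℝ)
    (hw : ∀ k x, w k x = pd (ix k) φ x / pd 2 φ x)
    (m : Fin 2 → (Fin 2 → ℝ) → ℝ) (hm : ∀ k, ContDiff ℝ 2 (m k))
    (n : Fin 2 → (Fin 3 → ℝ) → ℝ)
    (hn : ∀ k x, n k x = m k (fun i => x (ix i))) :
    (∀ x ∈ U,
      -(1 / (2 * h₃ x * h₄ x)) *
        (pd 2 (pd 2 h₄) x - (pd 2 h₄ x) ^ 2 / (2 * h₄ x) -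
          pd 2 h₃ x * pd 2 h₄ x / (2 * h₃ x)) = -Υ₂) ∧
    (∀ x ∈ U, ∀ k : Fin 2,
      w k x / (2 * h₄ x) *
          (pd 2 (pd 2 h₄) x - (pd 2 h₄ x) ^ 2 / (2 * h₄ x) -
            pd 2 h₃ x * pd 2 h₄ x / (2 * h₃ x)) +
        pd 2 h₄ x / (4 * h₄ x) * (pd (ix k) h₃ x / h₃ x + pd (ix k) h₄ x / h₄ x) -
        pd (ix k) (pd 2 h₄) x / (2 * h₄ x) = 0) ∧
    (∀ x ∈ U, ∀ k : Fin 2,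
      h₄ x / (2 * h₃ x) * pd 2 (pd 2 (n k)) x +
        (h₄ x / h₃ x * pd 2 h₃ x - 3 / 2 * pd 2 h₄ x) * pd 2 (n k) x / (2 * h₃ x) = 0) := by
  have h4fun : h₄ = fun z => Real.exp (2 * φ z) / (4 * Υ₂) := funext hd4
  have h3fun : h₃ = fun z => (pd 2 φ z) ^ 2 / Υ₂ := funext hd3
  -- differentiability at points of U
  have hcd : ∀ y ∈ U, ContDiffAt ℝ 2 φ y := fun y hy => hφ.contDiffAt (hU.mem_nhds hy)
  have hdφ : ∀ y ∈ U, DifferentiableAt ℝ φ y :=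
    fun y hy => (hcd y hy).differentiableAt (by norm_num)
  -- first derivatives of h₄ and h₃ on U
  have E4 : ∀ y ∈ U, ∀ i, pd i h₄ y = 2 * pd i φ y * h₄ y := by
    intro y hy i
    rw [h4fun, pd_exp _ (hdφ y hy) i]
  have E3 : ∀ y ∈ U, ∀ i, pd i h₃ y = 2 * pd 2 φ y * pd i (pd 2 φ) y / Υ₂ := by
    intro y hy i
    rw [h3fun, pd_sq _ (hcd y hy) i]
  -- second derivatives of h₄ at points of U
  have E44 : ∀ x ∈ U, ∀ j, pd j (pd 2 h₄) x =
      2 * pd 2 φ x * pd j h₄ x + 2 * h₄ x * pd j (pd 2 φ) x := by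
    intro x hx j
    have hev : pd 2 h₄ =ᶠ[nhds x] (fun y => (2 * pd 2 φ y) * h₄ y) := by
      filter_upwards [hU.mem_nhds hx] with y hy
      simpa [mul_assoc] using E4 y hy 2
    have : pd j (pd 2 h₄) x = pd j (fun y => (2 * pd 2 φ y) * h₄ y) x := by
      show fderiv ℝ _ x _ = fderiv ℝ _ x _
      rw [hev.fderiv_eq]
    rw [this]
    have hdg : DifferentiableAt ℝ h₄ x := by
      rw [h4fun]
      have h1 : HasFDerivAt (fun z => 2 * φ z) ((2:ℝ) • fderiv ℝ φ x) x :=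
        (hdφ x hx).hasFDerivAt.const_mul 2
      have h2 : HasFDerivAt (fun z => Real.exp (2 * φ z))
          (Real.exp (2 * φ x) • ((2:ℝ) • fderiv ℝ φ x)) x := h1.exp
      have hfeq : (fun z => Real.exp (2 * φ z) / (4 * Υ₂))
          = fun z => (1/(4 * Υ₂)) * Real.exp (2 * φ z) := by
        funext z; ring
      rw [hfeq]
      exact (h2.const_mul (1/(4 * Υ₂))).differentiableAt
    have hdf : DifferentiableAt ℝ (fun y => 2 * pd 2 φ y) x :=
      ((pd_hasFDerivAt (hcd x hx) 2).differentiableAt).const_mul 2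
    rw [pd_mul_eval hdf hdg j]
    have hpdf : pd j (fun y => 2 * pd 2 φ y) x = 2 * pd j (pd 2 φ) x := by
      have hG := pd_hasFDerivAt (hcd x hx) 2
      have h2 := hG.const_mul (2:ℝ)
      show fderiv ℝ _ x _ = _
      rw [h2.fderiv]
      show (2:ℝ) * ((fderiv ℝ (fderiv ℝ φ) x).flip (Pi.single 2 1)) (Pi.single j 1)
        = 2 * pd j (pd 2 φ) x
      have : pd j (pd 2 φ) x
          = ((fderiv ℝ (fderiv ℝ φ) x).flip (Pi.single 2 1)) (Pi.single j 1) := by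
        show fderiv ℝ (pd 2 φ) x (Pi.single j 1) = _
        rw [hG.fderiv]
      rw [this]
    rw [hpdf]
    ring
  -- nonvanishing
  have h4ne : ∀ x, h₄ x ≠ 0 := by
    intro x
    rw [hd4]
    exact div_ne_zero (Real.exp_ne_zero _) (mul_ne_zero (by norm_num) hΥne)
  refine ⟨?_, ?_, ?_⟩
  · intro x hx
    have ha := hφs x hx
    rw [E44 x hx 2, E4 x hx 2, E3 x hx 2, hd3]
    have hH := h4ne x
    set a := pd 2 φ x
    set A := pd 2 (pd 2 φ) x
    set H := h₄ x
    field_simp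
    try ring
    try tauto
  · intro x hx k
    have ha := hφs x hx
    rw [E44 x hx 2, E44 x hx (ix k), E4 x hx 2, E4 x hx (ix k),
        E3 x hx 2, E3 x hx (ix k), hd3, hw]
    have hH := h4ne x
    set a := pd 2 φ x
    set b := pd (ix k) φ x
    set A := pd 2 (pd 2 φ) x
    set B := pd (ix k) (pd 2 φ) x
    set H := h₄ x
    field_simp
    try ring
    try tauto
  · intro x hx k
    set P : (Fin 3 → ℝ) →L[ℝ] (Fin 2 → ℝ) :=
      ContinuousLinearMap.pi (fun i : Fin 2 => ContinuousLinearMap.proj (ix i)) with hP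
    have hnk : n k = fun y => m k (P y) := by
      funext y
      rw [hn]
      congr 1
    have hzero : ∀ z, pd 2 (n k) z = 0 := by
      intro z
      have hm' : HasFDerivAt (m k) (fderiv ℝ (m k) (P z)) (P z) :=
        (((hm k).differentiable (by norm_num)) (P z)).hasFDerivAt
      have hc : HasFDerivAt (n k) ((fderiv ℝ (m k) (P z)).comp P) z := by
        rw [hnk]
        exact hm'.comp z P.hasFDerivAt
      show fderiv ℝ (n k) z _ = 0
      rw [hc.fderiv]
      show fderiv ℝ (m k) (P z) (P (Pi.single 2 1)) = 0
      have hP0 : P (Pi.single 2 1 : Fin 3 → ℝ) = 0 := by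
        funext i
        fin_cases i <;>
          simp [hP, ContinuousLinearMap.pi_apply, ContinuousLinearMap.proj_apply, ix,
            Pi.single_apply]
      rw [hP0]
      simp
    have hzz : pd 2 (pd 2 (n k)) x = 0 := by
      have : pd 2 (n k) = fun _ => (0:ℝ) := funext hzero
      rw [this]
      simp [pd]
    rw [hzz, hzero x]
    ring
end
end

section
/- Let U ⊆ ℝ³ be open with coordinates (x¹,x²,y³), write a* = ∂a/∂y³ and ∂_k = ∂/∂x^k (k ∈ {1,2}). Let f : U → ℝ be C² with f ≠ 0 and ∂₃f ≠ 0 everywhere, and let h₀ ≠ 0 be a real constant. Define h₄ := −f² and h₃ := h₀² (∂₃f)². Then on U: (i) (∂₃h₄)² = (4/h₀²)·h₃·|h₄|, so the quantity (∂₃h₄)²/|h₃ h₄| is the constant 4/h₀² (the generating function φ with e^{2φ}|h₃h₄| = (h₄*)² is constant, φ* = 0); (ii) h₄** − (h₄*)²/(2h₄) − h₃*h₄*/(2h₃) = 0; (iii) for k = 1,2, (h₄*/(4h₄)) ( ∂_k h₃/h₃ + ∂_k h₄/h₄ ) − ∂_k(h₄*)/(2h₄) = 0, so that the mixed decoupled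 Einstein equation (w_k/(2h₄))[h₄** − (h₄*)²/(2h₄) − h₃*h₄*/(2h₃)] + (h₄*/(4h₄))(∂_kh₃/h₃ + ∂_kh₄/h₄) − ∂_k(h₄*)/(2h₄) = 0 holds for arbitrary functions w_k on U. -/
noncomputable section

/-- Second effective vacuum branch: `h₄ = −f²`, `h₃ = h₀²(f*)²` with `f* ≠ 0` give a
constant generating function `(h₄*)²/|h₃h₄| = 4/h₀²` and solve the vertical vacuum
Einstein equations with arbitrary `w_k`. -/
theorem vacuum_branch_generated_by_f
    (U : Set (Fin 3 → ℝ)) (hU : IsOpen U)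
    (f : (Fin 3 → ℝ) → ℝ) (hf : ContDiffOn ℝ 2 f U)
    (hfne : ∀ x ∈ U, f x ≠ 0) (hfs : ∀ x ∈ U, pd 2 f x ≠ 0)
    (h₀ : ℝ) (hh₀ : h₀ ≠ 0)
    (h₃ h₄ : (Fin 3 → ℝ) → ℝ)
    (hd4 : ∀ x, h₄ x = -(f x) ^ 2)
    (hd3 : ∀ x, h₃ x = h₀ ^ 2 * (pd 2 f x) ^ 2) :
    (∀ x ∈ U, (pd 2 h₄ x) ^ 2 = 4 / h₀ ^ 2 * h₃ x * |h₄ x|) ∧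
    (∀ x ∈ U, (pd 2 h₄ x) ^ 2 / |h₃ x * h₄ x| = 4 / h₀ ^ 2) ∧
    (∀ x ∈ U,
      pd 2 (pd 2 h₄) x - (pd 2 h₄ x) ^ 2 / (2 * h₄ x) -
        pd 2 h₃ x * pd 2 h₄ x / (2 * h₃ x) = 0) ∧
    (∀ x ∈ U, ∀ k : Fin 2,
      pd 2 h₄ x / (4 * h₄ x) * (pd (ix k) h₃ x / h₃ x + pd (ix k) h₄ x / h₄ x) -
        pd (ix k) (pd 2 h₄) x / (2 * h₄ x) = 0) ∧
    (∀ w : Fin 2 → (Fin 3 → ℝ) → ℝ, ∀ x ∈ U, ∀ k : Fin 2,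
      w k x / (2 * h₄ x) *
          (pd 2 (pd 2 h₄) x - (pd 2 h₄ x) ^ 2 / (2 * h₄ x) -
            pd 2 h₃ x * pd 2 h₄ x / (2 * h₃ x)) +
        pd 2 h₄ x / (4 * h₄ x) * (pd (ix k) h₃ x / h₃ x + pd (ix k) h₄ x / h₄ x) -
        pd (ix k) (pd 2 h₄) x / (2 * h₄ x) = 0) := by
  have hfd : ∀ {x}, x ∈ U → DifferentiableAt ℝ f x := fun {x} hx =>
    (hf.contDiffAt (hU.mem_nhds hx)).differentiableAt (by norm_num)
  have hgd : ∀ {x}, x ∈ U → DifferentiableAt ℝ (pd 2 f) x := by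
    intro x hx
    have h1 : ContDiffAt ℝ 1 (fderiv ℝ f) x :=
      (hf.contDiffAt (hU.mem_nhds hx)).fderiv_right (by norm_num)
    exact (h1.differentiableAt one_ne_zero).clm_apply (differentiableAt_const _)
  have key4 : ∀ x ∈ U, ∀ i, pd i h₄ x = -(2 * f x * pd i f x) := by
    intro x hx i
    have h4fun : h₄ = fun y => -(f y * f y) := funext fun y => by rw [hd4]; ring
    have H : HasFDerivAt h₄
        (-(f x • fderiv ℝ f x + f x • fderiv ℝ f x)) x := by
      rw [h4fun]
      exact ((hfd hx).hasFDerivAt.mul (hfd hx).hasFDerivAt).neg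
    simp only [pd, H.fderiv, ContinuousLinearMap.neg_apply,
      ContinuousLinearMap.add_apply, ContinuousLinearMap.smul_apply, smul_eq_mul]
    ring
  have key3 : ∀ x ∈ U, ∀ i,
      pd i h₃ x = 2 * h₀ ^ 2 * pd 2 f x * pd i (pd 2 f) x := by
    intro x hx i
    have h3fun : h₃ = fun y => h₀ ^ 2 * (pd 2 f y * pd 2 f y) :=
      funext fun y => by rw [hd3]; ring
    have H : HasFDerivAt h₃
        (h₀ ^ 2 • (pd 2 f x • fderiv ℝ (pd 2 f) x + pd 2 f x • fderiv ℝ (pd 2 f) x)) x := by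
      rw [h3fun]
      exact ((hgd hx).hasFDerivAt.mul (hgd hx).hasFDerivAt).const_mul (h₀ ^ 2)
    simp only [pd, H.fderiv, ContinuousLinearMap.smul_apply,
      ContinuousLinearMap.add_apply, smul_eq_mul]
    ring
  have key24 : ∀ x ∈ U, ∀ i,
      pd i (pd 2 h₄) x =
        -(2 * (pd i f x * pd 2 f x + f x * pd i (pd 2 f) x)) := by
    intro x hx i
    have hev : pd 2 h₄ =ᶠ[nhds x] fun y => -(2 * f y * pd 2 f y) := by
      filter_upwards [hU.mem_nhds hx] with y hy using key4 y hy 2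
    have H : HasFDerivAt (fun y => -(2 * f y * pd 2 f y))
        (-((2 * f x) • fderiv ℝ (pd 2 f) x + pd 2 f x • ((2:ℝ) • fderiv ℝ f x))) x :=
      (((hfd hx).hasFDerivAt.const_mul 2).mul (hgd hx).hasFDerivAt).neg
    have heq : fderiv ℝ (pd 2 h₄) x = fderiv ℝ (fun y => -(2 * f y * pd 2 f y)) x :=
      hev.fderiv_eq
    have step : pd i (pd 2 h₄) x =
        (fderiv ℝ (fun y => -(2 * f y * pd 2 f y)) x) (Pi.single i 1) := by
      exact congrArg (fun L : (Fin 3 → ℝ) →L[ℝ] ℝ => L (Pi.single i 1)) heq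
    rw [step, H.fderiv]
    simp only [pd, ContinuousLinearMap.neg_apply, ContinuousLinearMap.add_apply,
      ContinuousLinearMap.smul_apply, smul_eq_mul]
    ring
  have P1 : ∀ x ∈ U, (pd 2 h₄ x) ^ 2 = 4 / h₀ ^ 2 * h₃ x * |h₄ x| := by
    intro x hx
    rw [key4 x hx 2, hd3, hd4, abs_neg, abs_of_nonneg (sq_nonneg _)]
    field_simp
    ring
  have P2 : ∀ x ∈ U, (pd 2 h₄ x) ^ 2 / |h₃ x * h₄ x| = 4 / h₀ ^ 2 := by
    intro x hx
    rw [key4 x hx 2, hd3, hd4, abs_mul, abs_neg, abs_of_nonneg (sq_nonneg (f x)),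
      abs_of_nonneg (by positivity : (0:ℝ) ≤ h₀ ^ 2 * (pd 2 f x) ^ 2)]
    have ha := hfne x hx
    have hb := hfs x hx
    field_simp
    ring
  have P3 : ∀ x ∈ U,
      pd 2 (pd 2 h₄) x - (pd 2 h₄ x) ^ 2 / (2 * h₄ x) -
        pd 2 h₃ x * pd 2 h₄ x / (2 * h₃ x) = 0 := by
    intro x hx
    rw [key24 x hx 2, key4 x hx 2, key3 x hx 2, hd3, hd4]
    have ha := hfne x hx
    have hb := hfs x hx
    field_simp
    ring
  have P4 : ∀ x ∈ U, ∀ k : Fin 2,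
      pd 2 h₄ x / (4 * h₄ x) * (pd (ix k) h₃ x / h₃ x + pd (ix k) h₄ x / h₄ x) -
        pd (ix k) (pd 2 h₄) x / (2 * h₄ x) = 0 := by
    intro x hx k
    rw [key24 x hx (ix k), key4 x hx 2, key4 x hx (ix k), key3 x hx (ix k), hd3, hd4]
    have ha := hfne x hx
    have hb := hfs x hx
    field_simp
    ring
  refine ⟨P1, P2, P3, P4, ?_⟩
  intro w x hx k
  rw [P3 x hx, mul_zero, zero_add]
  exact P4 x hx k
end
end
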